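/- Let k ≥ 2 and let ℓ and m be k-subsets with ℓ_i = m_j for some indices 1 ≤ i, j ≤ k. Let ℓ̃ and m̃ be the (k−1)-subsets obtained by deleting the i-th entry of ℓ and the j-th entry of m respectively. Then β(ℓ̃, m̃) = β(ℓ,m) − 1. -/

import Mathlib

private lemma sa_val {n : ℕ} (i : Fin (n+1)) (a : Fin n) :
    (i.succAbove a).val = if a.val < i.val then a.val else a.val + 1 := by
  by_cases h : (a.castSucc : Fin (n+1)) < i
  · rw [Fin.succAbove_of_castSucc_lt _ _ h, if_pos (by simpa [Fin.lt_def] using h)]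
    rfl
  · rw [Fin.succAbove_of_le_castSucc _ _ (le_of_not_gt h),
      if_neg (by simpa [Fin.lt_def] using h)]
    rfl

private lemma key_iff {n : ℕ} (ℓ m : Fin (n+1) → ℤ) (hℓ : StrictMono ℓ) (hm : StrictMono m)
    (i j : Fin (n+1)) (h : ℓ i = m j) (d : ℕ) (hd : d + 1 ≤ n) :
    (∀ a b : Fin n, (a.val : ℤ) - (b.val : ℤ) = (d : ℤ) →
        m (j.succAbove b) ≤ ℓ (i.succAbove a)) ↔
    (∀ a b : Fin (n+1), (a.val : ℤ) - (b.val : ℤ) = (d : ℤ) → m b ≤ ℓ a) := by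
  have lmono : ∀ x y : Fin (n+1), x.val ≤ y.val → ℓ x ≤ ℓ y :=
    fun x y hxy => hℓ.monotone (Fin.le_def.mpr hxy)
  have lstrict : ∀ x y : Fin (n+1), x.val < y.val → ℓ x < ℓ y :=
    fun x y hxy => hℓ (Fin.lt_def.mpr hxy)
  have mmono : ∀ x y : Fin (n+1), x.val ≤ y.val → m x ≤ m y :=
    fun x y hxy => hm.monotone (Fin.le_def.mpr hxy)
  have mstrict : ∀ x y : Fin (n+1), x.val < y.val → m x < m y :=
    fun x y hxy => hm (Fin.lt_def.mpr hxy)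
  constructor
  · -- C̃(d) → C(d)
    intro H a b hab
    have hab' : a.val = b.val + d := by omega
    rcases lt_trichotomy b.val j.val with hb | hb | hb
    · rcases lt_or_ge a.val i.val with ha | ha
      · have han : a.val < n := by omega
        have hbn : b.val < n := by omega
        have h1 := H ⟨a.val, han⟩ ⟨b.val, hbn⟩ (by simp; omega)
        have e1 : i.succAbove ⟨a.val, han⟩ = a := by
          apply Fin.ext; rw [sa_val]; simp [ha]
        have e2 : j.succAbove ⟨b.val, hbn⟩ = b := by
          apply Fin.ext; rw [sa_val]; simp [hb]
        rwa [e1, e2] at h1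
      · calc m b ≤ m j := mmono _ _ (le_of_lt hb)
          _ = ℓ i := h.symm
          _ ≤ ℓ a := lmono _ _ ha
    · rcases lt_or_ge a.val i.val with ha | ha
      · exfalso
        have han : a.val < n := by omega
        have hjn : j.val < n := by omega
        have h1 := H ⟨a.val, han⟩ ⟨j.val, hjn⟩ (by simp; omega)
        have e1 : (j.succAbove ⟨j.val, hjn⟩).val = j.val + 1 := by
          rw [sa_val]; simp
        have e2 : (i.succAbove ⟨a.val, han⟩).val = a.val := by
          rw [sa_val]; simp [ha]
        have c1 : m j < m (j.succAbove ⟨j.val, hjn⟩) := mstrict _ _ (by omega)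
        have c2 : ℓ (i.succAbove ⟨a.val, han⟩) < ℓ i := lstrict _ _ (by omega)
        linarith
      · calc m b = m j := congrArg m (Fin.ext hb)
          _ = ℓ i := h.symm
          _ ≤ ℓ a := lmono _ _ ha
    · -- b.val > j.val
      have han : a.val - 1 < n := by omega
      have hbn : b.val - 1 < n := by omega
      have h1 := H ⟨a.val - 1, han⟩ ⟨b.val - 1, hbn⟩ (by simp; omega)
      have e2 : j.succAbove ⟨b.val - 1, hbn⟩ = b := by
        apply Fin.ext; rw [sa_val, if_neg (by simp; omega)]; simp; omega
      have e1 : (i.succAbove ⟨a.val - 1, han⟩).val ≤ a.val := by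
        rw [sa_val]; split_ifs <;> simp only [Fin.val_mk] <;> omega
      rw [e2] at h1
      exact h1.trans (lmono _ _ e1)
  · -- C(d) → C̃(d)
    intro H a b hab
    have hab' : a.val = b.val + d := by omega
    by_cases ha : a.val < i.val <;> by_cases hb : b.val < j.val
    · have ea : (i.succAbove a).val = a.val := by rw [sa_val, if_pos ha]
      have eb : (j.succAbove b).val = b.val := by rw [sa_val, if_pos hb]
      exact H _ _ (by rw [ea, eb]; omega)
    · -- a < i, b ≥ j : contradiction with ℓ i = m j
      exfalso
      have hlt : j.val + d < i.val := by omega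
      have h1 := H ⟨j.val + d, by omega⟩ j (by simp)
      have c1 : ℓ (⟨j.val + d, by omega⟩ : Fin (n+1)) < ℓ i := lstrict _ _ (by simpa using hlt)
      have c2 : m j ≤ m j := le_refl _
      linarith
    · -- a ≥ i, b < j
      have eb : (j.succAbove b).val = b.val := by rw [sa_val, if_pos hb]
      have ea : (i.succAbove a).val = a.val + 1 := by rw [sa_val, if_neg ha]
      have h1 := H ⟨a.val, by omega⟩ (j.succAbove b) (by rw [eb]; simp; omega)
      refine h1.trans (lmono _ _ ?_)
      simp [ea]
    · have ea : (i.succAbove a).val = a.val + 1 := by rw [sa_val, if_neg ha]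
      have eb : (j.succAbove b).val = b.val + 1 := by rw [sa_val, if_neg hb]
      exact H _ _ (by rw [ea, eb]; omega)



/-- `β(ℓ,m)`: the largest `p ∈ {1,…,k}` such that `ℓ i ≥ m j` for all `1 ≤ i,j ≤ k`
with `i − j = k − p`, and `0` if no such `p` exists. -/
noncomputable def kBeta (k : ℕ) (ℓ m : Fin k → ℤ) : ℕ :=
  sSup {p : ℕ | 1 ≤ p ∧ p ≤ k ∧
    ∀ i j : Fin k, (i.val : ℤ) - (j.val : ℤ) = (k : ℤ) - (p : ℤ) → m j ≤ ℓ i}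

/-- Let `k = n + 1 ≥ 2` and let `ℓ`, `m` be `k`-subsets with
`ℓ i = m j`.  Deleting the `i`-th entry of `ℓ` and the `j`-th entry of `m`
(implemented via `Fin.succAbove`) yields `(k−1)`-subsets `ℓ̃ = ℓ ∘ i.succAbove`,
`m̃ = m ∘ j.succAbove`; then `β(ℓ̃,m̃) = β(ℓ,m) − 1`. -/
theorem beta_delete_eq (n : ℕ) (hn : 1 ≤ n) (ℓ m : Fin (n + 1) → ℤ)
    (hℓ : StrictMono ℓ) (hm : StrictMono m) (i j : Fin (n + 1)) (h : ℓ i = m j) :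
    (kBeta n (ℓ ∘ i.succAbove) (m ∘ j.succAbove) : ℤ) = (kBeta (n + 1) ℓ m : ℤ) - 1 := by
  set S : Set ℕ := {p : ℕ | 1 ≤ p ∧ p ≤ n + 1 ∧
    ∀ a b : Fin (n + 1), (a.val : ℤ) - (b.val : ℤ) = ((n + 1 : ℕ) : ℤ) - (p : ℤ) → m b ≤ ℓ a}
    with hS
  set T : Set ℕ := {p : ℕ | 1 ≤ p ∧ p ≤ n ∧
    ∀ a b : Fin n, (a.val : ℤ) - (b.val : ℤ) = ((n : ℕ) : ℤ) - (p : ℤ) →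
      (m ∘ j.succAbove) b ≤ (ℓ ∘ i.succAbove) a} with hT
  have eS : kBeta (n + 1) ℓ m = sSup S := rfl
  have eT : kBeta n (ℓ ∘ i.succAbove) (m ∘ j.succAbove) = sSup T := rfl
  -- transfer lemma
  have step : ∀ p : ℕ, 1 ≤ p → (p ∈ T ↔ p + 1 ∈ S) := by
    intro p hp
    constructor
    · rintro ⟨_, hpn, H⟩
      refine ⟨by omega, by omega, ?_⟩
      intro a b hab
      exact (key_iff ℓ m hℓ hm i j h (n - p) (by omega)).mp
        (fun a b hab' => H a b (by omega)) a b (by omega)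
    · rintro ⟨_, hpn, H⟩
      refine ⟨hp, by omega, ?_⟩
      intro a b hab
      exact (key_iff ℓ m hℓ hm i j h (n - p) (by omega)).mpr
        (fun a b hab' => H a b (by omega)) a b (by omega)
  have h1S : 1 ∈ S := by
    refine ⟨le_refl 1, by omega, ?_⟩
    intro a b hab
    have ha : a.val = n := by omega
    have hb : b.val = 0 := by omega
    calc m b ≤ m j := hm.monotone (Fin.le_def.mpr (by omega))
      _ = ℓ i := h.symm
      _ ≤ ℓ a := hℓ.monotone (Fin.le_def.mpr (by omega))
  have hBddS : BddAbove S := ⟨n + 1, fun p hp => hp.2.1⟩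
  have hBddT : BddAbove T := ⟨n, fun p hp => hp.2.1⟩
  have hmemS : sSup S ∈ S := Nat.sSup_mem ⟨1, h1S⟩ hBddS
  rw [eS, eT]
  by_cases hb2 : 2 ≤ sSup S
  · have hmem : sSup S - 1 ∈ T := by
      rw [step (sSup S - 1) (by omega)]
      have : sSup S - 1 + 1 = sSup S := by omega
      rw [this]; exact hmemS
    have hub : ∀ p ∈ T, p ≤ sSup S - 1 := by
      intro p hp
      have := le_csSup hBddS ((step p hp.1).mp hp)
      omega
    have : sSup T = sSup S - 1 := le_antisymm (csSup_le ⟨_, hmem⟩ hub) (le_csSup hBddT hmem)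
    rw [this]; omega
  · have hb1 : sSup S = 1 := by
      have := hmemS.1; omega
    have hTe : T = ∅ := by
      ext p
      simp only [Set.mem_empty_iff_false, iff_false]
      intro hp
      have h1 := hp.1
      have := le_csSup hBddS ((step p hp.1).mp hp)
      omega
    rw [hTe, csSup_empty, hb1]
    simp
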